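/- There exists a 10×10 integer matrix S with |det S| = 20 such that Sᵀ · G(U⊕E_8) · S = G(D_5) ⊕ G(A_4) ⊕ ⟨20⟩. In other words, the lattice D_5 ⊕ A_4 ⊕ ⟨20⟩ embeds as a sublattice of index 20 in the even unimodular lattice U ⊕ E_8 of signature (1,9); i.e., D_5 ⊕ A_4 and a vector h of square 20 glue to U ⊕ E_8. -/

import Mathlib

/-- The Gram matrix of the negative-definite root lattice `Aₙ` (0-based indexing:
`i : Fin n` is the vertex `a_{i+1}`): diagonal entries `-2`, entries `1` at
adjacent positions, `0` elsewhere. -/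
def gramA (n : ℕ) : Matrix (Fin n) (Fin n) ℤ :=
  Matrix.of fun i j =>
    if i = j then -2
    else if i.val + 1 = j.val ∨ j.val + 1 = i.val then 1
    else 0

/-- The Gram matrix of the negative-definite root lattice `D_k` (0-based indexing:
`i : Fin k` is the vertex `d_{i+1}`): diagonal entries `-2`, entries `1` at the
edges `{i, i+1}` (1-based, `1 ≤ i ≤ k-2`) and `{k-2, k}` (1-based), `0` elsewhere. -/
def gramD (k : ℕ) : Matrix (Fin k) (Fin k) ℤ :=
  Matrix.of fun i j =>
    if i = j then -2
    else if (i.val + 1 = j.val ∧ j.val + 1 ≤ k - 1) ∨ (j.val + 1 = i.val ∧ i.val + 1 ≤ k - 1) ∨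
        (i.val = k - 3 ∧ j.val = k - 1) ∨ (j.val = k - 3 ∧ i.val = k - 1) then 1
    else 0

/-- The Gram matrix of the negative-definite root lattice `E_l`, `l ∈ {6,7,8}`
(0-based indexing: `i : Fin l` is the vertex `e_{i+1}`): diagonal entries `-2`,
entries `1` at the edges `{i, i+1}` (1-based, `2 ≤ i ≤ l-1`) and `{1, 4}`
(1-based), `0` elsewhere. -/
def gramE (l : ℕ) : Matrix (Fin l) (Fin l) ℤ :=
  Matrix.of fun i j =>
    if i = j then -2
    else if (i.val + 1 = j.val ∧ 1 ≤ i.val) ∨ (j.val + 1 = i.val ∧ 1 ≤ j.val) ∨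
        (i.val = 0 ∧ j.val = 3) ∨ (j.val = 0 ∧ i.val = 3) then 1
    else 0

/-- Block-diagonal (orthogonal) sum of two Gram matrices. -/
def blockSum {m n : ℕ} (A : Matrix (Fin m) (Fin m) ℤ) (B : Matrix (Fin n) (Fin n) ℤ) :
    Matrix (Fin (m + n)) (Fin (m + n)) ℤ :=
  Matrix.reindex finSumFinEquiv finSumFinEquiv (Matrix.fromBlocks A 0 0 B)

/-- The Gram matrix of the hyperbolic plane `U`. -/
def gramU : Matrix (Fin 2) (Fin 2) ℤ := !![0, 1; 1, 0]

/-- The Gram matrix of the even unimodular lattice `U ⊕ E₈` of signature `(1,9)`. -/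
def gramUE8 : Matrix (Fin 10) (Fin 10) ℤ := blockSum gramU (gramE 8)


def S15 : Matrix (Fin 10) (Fin 10) ℤ :=
  !![0, 0, 0, 0, 0, 0, 0, 0, 1, -4;
     0, 0, 1, -1, 0, 0, 0, 0, 0, -5;
     -1, 2, 0, 1, -3, 1, 0, -1, 0, 2;
     0, 1, 0, 1, -2, 0, 1, -1, 0, 1;
     -1, 2, 0, 2, -4, 0, 1, -2, 0, 4;
     -2, 4, 0, 2, -6, 0, 1, -2, 0, 4;
     -1, 3, 0, 2, -5, 0, 0, -1, 0, 3;
     -1, 2, 0, 2, -4, 0, 0, 0, -1, 4;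
     0, 1, 0, 1, -3, 0, 0, 0, -1, 4;
     0, 0, 1, 0, -2, 0, 0, 0, 0, 0]

def U15 : Matrix (Fin 10) (Fin 10) ℤ :=
  !![0, 0, 1, 0, 0, 0, 0, 0, 0, 0;
     0, 0, 0, 1, 0, 0, 0, 0, 0, 0;
     0, 1, 0, 0, 0, 0, 0, 0, 0, 0;
     0, 0, -1, 0, 1, 0, 0, 0, 0, 0;
     0, 0, 0, -1, 0, 0, 0, 0, 1, 0;
     0, 0, -1, -1, 0, 0, 1, 0, 0, 0;
     0, 0, 0, 0, -1, 0, 0, 1, 0, 0;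
     0, -1, 0, 0, 0, 0, 1, -1, -1, 1;
     1, 0, 0, 0, 0, 0, 0, 0, 0, 0;
     -5, -4, 0, 2, -3, 1, 2, -1, -4, 4]

def V15 : Matrix (Fin 10) (Fin 10) ℤ :=
  !![0, 0, 0, 0, 0, 0, 0, 0, 1, 0;
     0, 0, 1, 0, 0, 0, 0, 0, 0, 0;
     1, 0, 0, 0, 0, 0, 0, 0, 0, 0;
     0, 1, 0, 0, 0, 0, 0, 0, 0, 0;
     1, 0, 0, 1, 0, 0, 0, 0, 0, 0;
     2, 0, 0, 0, 0, 2, -3, -4, 5, 1;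
     1, 1, 0, 0, 0, 1, 0, 0, 0, 0;
     1, 0, 0, 1, 0, 0, 1, 0, 0, 0;
     0, 1, 0, 0, 1, 0, 0, 0, 0, 0;
     0, 0, 1, 1, 1, -1, 1, 1, 0, 0]

def T15 : Matrix (Fin 10) (Fin 10) ℤ :=
  !![-1, 2, 0, 1, -3, 1, 0, -1, 0, 2;
     0, 1, 0, 1, -2, 0, 1, -1, 0, 1;
     0, 0, 1, -1, 0, 0, 0, 0, 0, -5;
     0, 0, 0, 1, -1, -1, 1, -1, 0, 2;
     0, 0, 0, 0, -1, 0, -1, 1, -1, 3;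
     0, 0, 0, 0, 0, -1, -1, 1, 0, 0;
     0, 0, 0, 0, 0, 0, -1, 2, -1, 0;
     0, 0, 0, 0, 0, 0, 0, -1, 2, 0;
     0, 0, 0, 0, 0, 0, 0, 0, 1, -4;
     0, 0, 0, 0, 0, 0, 0, 0, 0, 20]

instance matEntryDec {m n α : Type*} [DecidableEq α] (A : Matrix m n α) (i : m) (j : n) (x : α) :
    Decidable (A i j = x) := decEq (A i j) x

instance matEqDec {m n α : Type*} [Fintype m] [Fintype n] [DecidableEq α] (A B : Matrix m n α) :
    Decidable (∀ i j, A i j = B i j) :=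
  haveI h1 : ∀ i, DecidablePred (fun j => A i j = B i j) := fun i j => decEq (A i j) (B i j)
  haveI h2 : DecidablePred (fun i => ∀ j, A i j = B i j) := fun i => Fintype.decidableForallFintype
  Fintype.decidableForallFintype

lemma l1 : ∀ i j, (U15 * V15) i j = (1 : Matrix (Fin 10) (Fin 10) ℤ) i j := by decide
lemma l2 : ∀ i j, (U15 * S15) i j = T15 i j := by decide
lemma l3 : ∀ i j : Fin 10, id j < id i → T15 i j = 0 := by decide
lemma l4 : (∏ i, T15 i i) = -20 := by decide
lemma abs_det_aux {n : ℕ} (A U V T : Matrix (Fin n) (Fin n) ℤ) (hUV : U * V = 1)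
    (hUA : U * A = T) (hT : T.det = -20) : |A.det| = 20 := by
  have h2 : U.det * A.det = -20 := by rw [← Matrix.det_mul, hUA, hT]
  have hU : IsUnit U.det :=
    IsUnit.of_mul_eq_one V.det (by rw [← Matrix.det_mul, hUV, Matrix.det_one])
  rcases Int.isUnit_iff.mp hU with h | h
  · rw [h, one_mul] at h2; rw [h2]; rfl
  · rw [h, neg_one_mul, neg_eq_iff_eq_neg] at h2; rw [h2]; rfl
lemma S15_det_abs : |S15.det| = 20 := by
  have htri : T15.BlockTriangular id := fun i j hij => l3 i j hij
  exact abs_det_aux S15 U15 V15 T15 (Matrix.ext l1) (Matrix.ext l2)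
    (by rw [Matrix.det_of_upperTriangular htri]; exact l4)
/-- The lattice `D₅ ⊕ A₄ ⊕ ⟨20⟩` embeds with index `20` into `U ⊕ E₈`: `D₅ ⊕ A₄` and a vector of square `20` glue to `U ⊕ E₈`. -/
theorem glue_15 :
    ∃ S : Matrix (Fin 10) (Fin 10) ℤ,
      |S.det| = 20 ∧ S.transpose * gramUE8 * S = blockSum (blockSum (gramD 5) (gramA 4)) !![(20 : ℤ)] := by
  refine ⟨S15, S15_det_abs, ?_⟩
  have h : ∀ i j, (S15.transpose * gramUE8 * S15) i j =
      (blockSum (blockSum (gramD 5) (gramA 4)) !![(20 : ℤ)]) i j := by decide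
  exact Matrix.ext h
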